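/- For every 3SAT formula φ on n boolean variables (n even, n ≥ 4), every vertex of G(φ) other than V₁ and V_{2n} has eccentricity strictly less than 3n − 1; consequently the only pair of vertices of G(φ) realizing the diameter is {V₁, V_{2n}}, and every diametral path of G(φ) is a shortest path joining V₁ and V_{2n}. -/

import Mathlib

open SimpleGraph

/-- Vertices of the graph `G(φ)` associated with a 3SAT formula `φ` with `m` clauses over `n`
boolean variables (`n` even):
* `lit i b` is the literal vertex `X_{i+1}` (if `b = true`) or `X̄_{i+1}` (if `b = false`);
* `chain k` is the vertex `V_{k+1}` of the two pending chains `V₁ — ⋯ — V_n` and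
  `V_{n+1} — ⋯ — V_{2n}`;
* `clause j` is the vertex of the clause `C_{j+1}`;
* `inner j t s` is the `(s+1)`-st internal vertex of the path of length `n/2 + 1` (with `n/2`
  internal vertices) joining the clause vertex `C_{j+1}` to the vertex of its `(t+1)`-st
  literal. -/
inductive Vert (n m : ℕ) : Type
  | lit : Fin n → Bool → Vert n m
  | chain : Fin (2 * n) → Vert n m
  | clause : Fin m → Vert n m
  | inner : Fin m → Fin 3 → Fin (n / 2) → Vert n m
  deriving DecidableEq

/-- The base (asymmetric) adjacency relation of `G(φ)`, where the 3SAT formula `φ` assigns to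
each clause index `j` and each slot `t ∈ {0,1,2}` a literal `φ j t = (i, b)` (variable index
`i`, polarity `b`):
* `X_i` and `X̄_i` are adjacent, and every vertex of `{X_i, X̄_i}` is adjacent to every vertex
  of `{X_{i+1}, X̄_{i+1}}`;
* `V₁ — ⋯ — V_n` and `V_{n+1} — ⋯ — V_{2n}` are paths, `V_n` is moreover adjacent to both
  `X₁, X̄₁` and `V_{n+1}` to both `X_n, X̄_n`;
* each clause vertex `C_j` is joined to the vertex of each of its literals by a path of length
  `n/2 + 1` whose `n/2` internal vertices are the `inner j t s`. -/
def satRel (n m : ℕ) (φ : Fin m → Fin 3 → Fin n × Bool) : Vert n m → Vert n m → Prop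
  | .lit i b, .lit i' b' => (i = i' ∧ b ≠ b') ∨ (i : ℕ) + 1 = (i' : ℕ)
  | .chain k, .chain k' => (k : ℕ) + 1 = (k' : ℕ) ∧ (k' : ℕ) ≠ n
  | .chain k, .lit i _ => ((k : ℕ) = n - 1 ∧ (i : ℕ) = 0) ∨ ((k : ℕ) = n ∧ (i : ℕ) = n - 1)
  | .clause j, .inner j' _ s => j = j' ∧ (s : ℕ) = 0
  | .inner j t s, .inner j' t' s' => j = j' ∧ t = t' ∧ (s : ℕ) + 1 = (s' : ℕ)
  | .inner j t s, .lit i b => (s : ℕ) = n / 2 - 1 ∧ φ j t = (i, b)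
  | _, _ => False

/-- The graph `G(φ)` associated with a 3SAT formula `φ`. -/
def Gphi (n m : ℕ) (φ : Fin m → Fin 3 → Fin n × Bool) : SimpleGraph (Vert n m) :=
  SimpleGraph.fromRel (satRel n m φ)

namespace GAux

variable {n m : ℕ} {φ : Fin m → Fin 3 → Fin n × Bool}

lemma gphi_adj {u v : Vert n m} :
    (Gphi n m φ).Adj u v ↔ u ≠ v ∧ (satRel n m φ u v ∨ satRel n m φ v u) :=
  SimpleGraph.fromRel_adj _ _ _

/-- walk bound -/
def wb (φ : Fin m → Fin 3 → Fin n × Bool) (u v : Vert n m) (L : ℕ) : Prop :=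
  ∃ p : (Gphi n m φ).Walk u v, p.length ≤ L

lemma wb_refl (u : Vert n m) : wb φ u u 0 := ⟨.nil, le_rfl⟩

lemma wb_mono {u v : Vert n m} {L L' : ℕ} (h : wb φ u v L) (hL : L ≤ L') : wb φ u v L' :=
  ⟨h.choose, h.choose_spec.trans hL⟩

lemma wb_adj {u v : Vert n m} (h : (Gphi n m φ).Adj u v) : wb φ u v 1 :=
  ⟨h.toWalk, by simp⟩

lemma wb_trans {u v w : Vert n m} {L1 L2 : ℕ} (h1 : wb φ u v L1) (h2 : wb φ v w L2) :
    wb φ u w (L1 + L2) := by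
  obtain ⟨p, hp⟩ := h1; obtain ⟨q, hq⟩ := h2
  exact ⟨p.append q, by rw [SimpleGraph.Walk.length_append]; omega⟩

lemma wb_symm {u v : Vert n m} {L : ℕ} (h : wb φ u v L) : wb φ v u L := by
  obtain ⟨p, hp⟩ := h
  exact ⟨p.reverse, by simpa using hp⟩

lemma dist_le_of_wb {u v : Vert n m} {L : ℕ} (h : wb φ u v L) : (Gphi n m φ).dist u v ≤ L :=
  le_trans (SimpleGraph.dist_le h.choose) h.choose_spec

lemma reachable_of_wb {u v : Vert n m} {L : ℕ} (h : wb φ u v L) : (Gphi n m φ).Reachable u v :=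
  ⟨h.choose⟩

/-- Lipschitz potential for the lower bound. -/
def pf (φ : Fin m → Fin 3 → Fin n × Bool) : Vert n m → ℕ
  | .lit i _ => n + i
  | .chain k => if (k : ℕ) < n then k else n + k
  | .clause _ => n + n / 2
  | .inner j t s =>
      if n + ((φ j t).1 : ℕ) ≤ n + n / 2 then
        min (n + ((φ j t).1 : ℕ) + (n / 2 - (s : ℕ))) (n + n / 2)
      else max (n + ((φ j t).1 : ℕ) - (n / 2 - (s : ℕ))) (n + n / 2)

lemma lip (hn : n % 2 = 0) (h4 : 4 ≤ n) {u v : Vert n m} (h : satRel n m φ u v) :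
    pf φ u ≤ pf φ v + 1 ∧ pf φ v ≤ pf φ u + 1 := by
  cases u with
  | lit i b =>
    cases v with
    | lit i' b' =>
      rcases h with ⟨h1, -⟩ | h1
      · subst h1; simp [pf]
      · simp only [pf]; omega
    | chain k => exact h.elim
    | clause j => exact h.elim
    | inner j t s => exact h.elim
  | chain k =>
    cases v with
    | lit i b =>
      have hk := k.isLt
      rcases h with ⟨h1, h2⟩ | ⟨h1, h2⟩ <;> simp only [pf] <;> split_ifs <;> omega
    | chain k' =>
      have hk := k.isLt; have hk' := k'.isLt
      obtain ⟨h1, h2⟩ := h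
      simp only [pf]; split_ifs <;> omega
    | clause j => exact h.elim
    | inner j t s => exact h.elim
  | clause j =>
    cases v with
    | inner j' t s =>
      obtain ⟨h1, h2⟩ := h
      subst h1
      have hi := ((φ j t).1).isLt
      simp only [pf, h2]
      split_ifs <;> omega
    | lit i b => exact h.elim
    | chain k => exact h.elim
    | clause j' => exact h.elim
  | inner j t s =>
    cases v with
    | inner j' t' s' =>
      obtain ⟨h1, h2, h3⟩ := h
      subst h1; subst h2
      have hi := ((φ j t).1).isLt
      have hs := s.isLt; have hs' := s'.isLt
      simp only [pf]; split_ifs <;> omega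
    | lit i b =>
      obtain ⟨h1, h2⟩ := h
      have hi := ((φ j t).1).isLt
      have hs := s.isLt
      simp only [pf, h2]
      split_ifs <;> omega
    | chain k => exact h.elim
    | clause j' => exact h.elim

lemma pf_chain_val (k : Fin (2 * n)) :
    pf φ (.chain k) = if (k : ℕ) < n then (k : ℕ) else n + (k : ℕ) := rfl

lemma pf_walk (hn : n % 2 = 0) (h4 : 4 ≤ n) {u v : Vert n m} (p : (Gphi n m φ).Walk u v) :
    pf φ v ≤ pf φ u + p.length := by
  induction p with
  | nil => simp
  | cons hadj p ih =>
    rename_i a b c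
    rw [gphi_adj] at hadj
    have hle : pf φ b ≤ pf φ a + 1 := by
      rcases hadj.2 with h' | h'
      · exact (lip hn h4 h').2
      · exact (lip hn h4 h').1
    rw [SimpleGraph.Walk.length_cons]
    omega


section walks
variable (h4 : 4 ≤ n)

omit h4 in
lemma adj_of_rel {u v : Vert n m} (hne : u ≠ v) (h : satRel n m φ u v) :
    (Gphi n m φ).Adj u v := gphi_adj.mpr ⟨hne, Or.inl h⟩

omit h4 in
lemma wb_chain : ∀ (d : ℕ) (k k' : Fin (2 * n)), (k' : ℕ) = (k : ℕ) + d →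
    ((k' : ℕ) < n ∨ n ≤ (k : ℕ)) → wb φ (.chain k) (.chain k') d := by
  intro d
  induction d with
  | zero =>
    intro k k' h _
    have : k = k' := Fin.ext (by omega)
    subst this; exact wb_refl _
  | succ d ih =>
    intro k k' h h2
    have hk' := k'.isLt
    have hlt : (k : ℕ) + 1 < 2 * n := by omega
    have hadj : (Gphi n m φ).Adj (.chain k) (.chain ⟨(k : ℕ) + 1, hlt⟩) := by
      refine gphi_adj.mpr ⟨?_, Or.inl ?_⟩
      · intro hc; injection hc with hc; exact absurd (congrArg Fin.val hc) (by simp)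
      · exact ⟨rfl, by simp; omega⟩
    have := wb_trans (wb_adj hadj) (ih ⟨(k : ℕ) + 1, hlt⟩ k' (by simp; omega) (by simp; omega))
    simpa [Nat.add_comm] using this

omit h4 in
lemma wb_litup : ∀ (d : ℕ) (i i' : Fin n) (b b' : Bool), (i' : ℕ) = (i : ℕ) + d → 0 < d →
    wb φ (.lit i b) (.lit i' b') d := by
  intro d
  induction d with
  | zero => omega
  | succ d ih =>
    intro i i' b b' h hd
    have hi' := i'.isLt
    rcases Nat.eq_zero_or_pos d with hd0 | hd0
    · subst hd0
      refine wb_adj (gphi_adj.mpr ⟨?_, Or.inl (Or.inr (by omega))⟩)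
      intro hc; injection hc with hc _; exact absurd (congrArg Fin.val hc) (by omega)
    · have hlt : (i : ℕ) + 1 < n := by omega
      have hadj : (Gphi n m φ).Adj (.lit i b) (.lit ⟨(i : ℕ) + 1, hlt⟩ b) := by
        refine gphi_adj.mpr ⟨?_, Or.inl (Or.inr (by simp))⟩
        intro hc; injection hc with hc _; exact absurd (congrArg Fin.val hc) (by simp)
      have := wb_trans (wb_adj hadj) (ih ⟨(i : ℕ) + 1, hlt⟩ i' b b' (by simp; omega) hd0)
      simpa [Nat.add_comm] using this

omit h4 in
lemma wb_litflip (i : Fin n) (b b' : Bool) : wb φ (.lit i b) (.lit i b') 1 := by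
  by_cases hb : b = b'
  · subst hb; exact wb_mono (wb_refl _) (Nat.zero_le _)
  · refine wb_adj (gphi_adj.mpr ⟨?_, Or.inl (Or.inl ⟨rfl, hb⟩)⟩)
    intro hc; injection hc; simp_all

omit h4 in
lemma wb_lit_lit (i i' : Fin n) (b b' : Bool) : wb φ (.lit i b) (.lit i' b') n := by
  rcases lt_trichotomy (i : ℕ) (i' : ℕ) with hlt | heq | hgt
  · exact wb_mono (wb_litup ((i' : ℕ) - (i : ℕ)) i i' b b' (by omega) (by omega))
      (by have := i'.isLt; omega)
  · have : i = i' := Fin.ext heq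
    subst this
    exact wb_mono (wb_litflip i b b') (by have := i.isLt; omega)
  · exact wb_mono (wb_symm (wb_litup ((i : ℕ) - (i' : ℕ)) i' i b' b (by omega) (by omega)))
      (by have := i.isLt; omega)

omit h4 in
lemma wb_innerseg : ∀ (d : ℕ) (j : Fin m) (t : Fin 3) (s s' : Fin (n / 2)),
    (s' : ℕ) = (s : ℕ) + d → wb φ (.inner j t s) (.inner j t s') d := by
  intro d
  induction d with
  | zero =>
    intro j t s s' h
    have : s = s' := Fin.ext (by omega)
    subst this; exact wb_refl _
  | succ d ih =>
    intro j t s s' h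
    have hs' := s'.isLt
    have hlt : (s : ℕ) + 1 < n / 2 := by omega
    have hadj : (Gphi n m φ).Adj (.inner j t s) (.inner j t ⟨(s : ℕ) + 1, hlt⟩) := by
      refine gphi_adj.mpr ⟨?_, Or.inl ⟨rfl, rfl, by simp⟩⟩
      intro hc; injection hc with h1 h2 h3; exact absurd (congrArg Fin.val h3) (by simp)
    have := wb_trans (wb_adj hadj) (ih j t ⟨(s : ℕ) + 1, hlt⟩ s' (by simp; omega))
    simpa [Nat.add_comm] using this

include h4

lemma wb_clause_inner (j : Fin m) (t : Fin 3) (s : Fin (n / 2)) :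
    wb φ (.clause j) (.inner j t s) ((s : ℕ) + 1) := by
  have h0 : (0 : ℕ) < n / 2 := by omega
  have hadj : (Gphi n m φ).Adj (.clause j) (.inner j t ⟨0, h0⟩) :=
    gphi_adj.mpr ⟨(by intro hc; cases hc), Or.inl ⟨rfl, rfl⟩⟩
  have := wb_trans (wb_adj hadj) (wb_innerseg (s : ℕ) j t ⟨0, h0⟩ s (by simp))
  simpa [Nat.add_comm] using this

lemma wb_inner_lit (j : Fin m) (t : Fin 3) (s : Fin (n / 2)) :
    wb φ (.inner j t s) (.lit (φ j t).1 (φ j t).2) (n / 2 - (s : ℕ)) := by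
  have hs := s.isLt
  have hlast : (n / 2 - 1 : ℕ) < n / 2 := by omega
  have h1 : wb φ (.inner j t s) (.inner j t ⟨n / 2 - 1, hlast⟩) (n / 2 - 1 - (s : ℕ)) :=
    wb_innerseg _ j t s _ (by simp; omega)
  have hadj : (Gphi n m φ).Adj (.inner j t ⟨n / 2 - 1, hlast⟩) (.lit (φ j t).1 (φ j t).2) :=
    gphi_adj.mpr ⟨(by intro hc; cases hc), Or.inl ⟨by simp, rfl⟩⟩
  exact wb_mono (wb_trans h1 (wb_adj hadj)) (by omega)

lemma wb_clause_lit (j : Fin m) (t : Fin 3) :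
    wb φ (.clause j) (.lit (φ j t).1 (φ j t).2) (n / 2 + 1) := by
  have h0 : (0 : ℕ) < n / 2 := by omega
  have h1 := wb_trans (wb_clause_inner (φ := φ) h4 j t ⟨0, h0⟩) (wb_inner_lit (φ := φ) h4 j t ⟨0, h0⟩)
  exact wb_mono h1 (by simp; omega)

lemma wb_lit_lowchain (i : Fin n) (b : Bool) (k : Fin (2 * n)) (hk : (k : ℕ) < n) :
    wb φ (.lit i b) (.chain k) ((i : ℕ) + (n - (k : ℕ))) := by
  have h0n : (0 : ℕ) < n := by omega
  have h1 : wb φ (.lit i b) (.lit ⟨0, h0n⟩ b) (i : ℕ) := by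
    rcases Nat.eq_zero_or_pos (i : ℕ) with h | h
    · have : i = ⟨0, h0n⟩ := Fin.ext (by simp; omega)
      subst this; exact wb_refl _
    · exact wb_symm (wb_litup (i : ℕ) ⟨0, h0n⟩ i b b (by simp) h)
  have hn1 : (n - 1 : ℕ) < 2 * n := by omega
  have hadj : (Gphi n m φ).Adj (.chain ⟨n - 1, hn1⟩) (.lit ⟨0, h0n⟩ b) :=
    adj_of_rel (by intro hc; cases hc) (Or.inl ⟨by simp, by simp⟩)
  have h2 : wb φ (.chain k) (.chain ⟨n - 1, hn1⟩) (n - 1 - (k : ℕ)) :=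
    wb_chain _ k _ (by simp; omega) (by simp; omega)
  have := wb_trans (wb_trans h1 (wb_adj hadj.symm)) (wb_symm h2)
  exact wb_mono this (by omega)

lemma wb_lit_highchain (i : Fin n) (b : Bool) (k : Fin (2 * n)) (hk : n ≤ (k : ℕ)) :
    wb φ (.lit i b) (.chain k) ((n - 1 - (i : ℕ)) + 1 + ((k : ℕ) - n)) := by
  have hi := i.isLt
  have hn1 : (n - 1 : ℕ) < n := by omega
  have h1 : wb φ (.lit i b) (.lit ⟨n - 1, hn1⟩ b) (n - 1 - (i : ℕ)) := by
    rcases Nat.eq_or_lt_of_le (by omega : (i : ℕ) ≤ n - 1) with h | h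
    · have : i = (⟨n - 1, hn1⟩ : Fin n) := Fin.ext (by simp; omega)
      subst this; exact wb_mono (wb_refl _) (Nat.zero_le _)
    · exact wb_litup _ i _ b b (by simp; omega) (by omega)
  have hnn : (n : ℕ) < 2 * n := by omega
  have hadj : (Gphi n m φ).Adj (.chain ⟨n, hnn⟩) (.lit ⟨n - 1, hn1⟩ b) :=
    adj_of_rel (by intro hc; cases hc) (Or.inr ⟨by simp, by simp⟩)
  have h2 : wb φ (.chain ⟨n, hnn⟩) (.chain k) ((k : ℕ) - n) :=
    wb_chain _ _ k (by simp; omega) (by simp)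
  exact wb_trans (wb_trans h1 (wb_adj hadj.symm)) h2

lemma wb_lit_chain (i : Fin n) (b : Bool) (k : Fin (2 * n)) :
    wb φ (.lit i b) (.chain k) (2 * n - 1) := by
  have hi := i.isLt; have hk := k.isLt
  rcases Nat.lt_or_ge (k : ℕ) n with h | h
  · exact wb_mono (wb_lit_lowchain h4 i b k h) (by omega)
  · exact wb_mono (wb_lit_highchain h4 i b k h) (by omega)


lemma wb_to_lit (u : Vert n m) (i' : Fin n) (b' : Bool) : wb φ u (.lit i' b') (2 * n - 1) := by
  cases u with
  | lit i b => exact wb_mono (wb_lit_lit i i' b b') (by omega)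
  | chain k => exact wb_symm (wb_lit_chain h4 i' b' k)
  | clause j =>
    exact wb_mono (wb_trans (wb_clause_lit h4 j 0) (wb_lit_lit (φ j 0).1 i' (φ j 0).2 b'))
      (by omega)
  | inner j t s =>
    exact wb_mono (wb_trans (wb_inner_lit h4 j t s) (wb_lit_lit (φ j t).1 i' (φ j t).2 b'))
      (by omega)

lemma main_ub (u v : Vert n m)
    (hu : ∀ k : Fin (2 * n), u = .chain k → 0 < (k : ℕ) ∧ (k : ℕ) < 2 * n - 1) :
    wb φ u v (3 * n - 2) := by
  have h0n : (0 : ℕ) < n := by omega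
  cases v with
  | lit i' b' => exact wb_mono (wb_to_lit h4 u i' b') (by omega)
  | clause j' =>
    exact wb_mono (wb_trans (wb_to_lit h4 u (φ j' 0).1 (φ j' 0).2)
      (wb_symm (wb_clause_lit h4 j' 0))) (by omega)
  | inner j' t' s' =>
    have hb := wb_trans (wb_to_lit h4 u (φ j' t').1 (φ j' t').2)
      (wb_symm (wb_inner_lit h4 j' t' s'))
    exact wb_mono hb (by have := s'.isLt; omega)
  | chain k' =>
    have hk' := k'.isLt
    cases u with
    | lit i b => exact wb_mono (wb_lit_chain h4 i b k') (by omega)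
    | clause j =>
      exact wb_mono (wb_trans (wb_clause_lit h4 j 0) (wb_lit_chain h4 (φ j 0).1 (φ j 0).2 k'))
        (by omega)
    | inner j t s =>
      exact wb_mono (wb_trans (wb_inner_lit h4 j t s) (wb_lit_chain h4 (φ j t).1 (φ j t).2 k'))
        (by have := s.isLt; omega)
    | chain k =>
      obtain ⟨hk1, hk2⟩ := hu k rfl
      have hk := k.isLt
      rcases Nat.lt_or_ge (k : ℕ) n with h1 | h1 <;> rcases Nat.lt_or_ge (k' : ℕ) n with h2 | h2
      · rcases le_or_gt (k : ℕ) (k' : ℕ) with h3 | h3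
        · exact wb_mono (wb_chain ((k' : ℕ) - (k : ℕ)) k k' (by omega) (by omega)) (by omega)
        · exact wb_mono (wb_symm (wb_chain ((k : ℕ) - (k' : ℕ)) k' k (by omega) (by omega)))
            (by omega)
      · exact wb_mono (wb_trans (wb_symm (wb_lit_lowchain h4 ⟨0, h0n⟩ true k h1))
          (wb_lit_highchain h4 ⟨0, h0n⟩ true k' h2)) (by simp; omega)
      · exact wb_mono (wb_symm (wb_trans (wb_symm (wb_lit_lowchain h4 ⟨0, h0n⟩ true k' h2))
          (wb_lit_highchain h4 ⟨0, h0n⟩ true k h1))) (by simp; omega)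
      · rcases le_or_gt (k : ℕ) (k' : ℕ) with h3 | h3
        · exact wb_mono (wb_chain ((k' : ℕ) - (k : ℕ)) k k' (by omega) (by omega)) (by omega)
        · exact wb_mono (wb_symm (wb_chain ((k : ℕ) - (k' : ℕ)) k' k (by omega) (by omega)))
            (by omega)

lemma ub_all (u v : Vert n m) : wb φ u v (3 * n - 1) := by
  have h0n : (0 : ℕ) < n := by omega
  have h2n : (2 * n - 1 : ℕ) < 2 * n := by omega
  by_cases hu : ∀ k : Fin (2 * n), u = .chain k → 0 < (k : ℕ) ∧ (k : ℕ) < 2 * n - 1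
  · exact wb_mono (main_ub h4 u v hu) (by omega)
  · by_cases hv : ∀ k : Fin (2 * n), v = .chain k → 0 < (k : ℕ) ∧ (k : ℕ) < 2 * n - 1
    · exact wb_mono (wb_symm (main_ub h4 v u hv)) (by omega)
    · push_neg at hu hv
      obtain ⟨k, rfl, hk⟩ := hu
      obtain ⟨k', rfl, hk'⟩ := hv
      have hkk := k.isLt; have hkk' := k'.isLt
      have hcross : ∀ (a b : Fin (2 * n)), (a : ℕ) = 0 → (b : ℕ) = 2 * n - 1 →
          wb φ (Vert.chain a) (Vert.chain b) (3 * n - 1) := by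
        intro a b ha hb
        exact wb_mono (wb_trans (wb_symm (wb_lit_lowchain h4 ⟨0, h0n⟩ true a (by omega)))
          (wb_lit_highchain h4 ⟨0, h0n⟩ true b (by omega))) (by simp; omega)
      have hk0 : (k : ℕ) = 0 ∨ (k : ℕ) = 2 * n - 1 := by omega
      have hk'0 : (k' : ℕ) = 0 ∨ (k' : ℕ) = 2 * n - 1 := by omega
      rcases hk0 with h | h <;> rcases hk'0 with h' | h'
      · have : k = k' := Fin.ext (by omega)
        subst this; exact wb_mono (wb_refl _) (Nat.zero_le _)
      · exact hcross k k' h h'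
      · exact wb_symm (hcross k' k h' h)
      · have : k = k' := Fin.ext (by omega)
        subst this; exact wb_mono (wb_refl _) (Nat.zero_le _)

end walks
end GAux

/-- The eccentricity of a vertex: the largest distance from `x` to any vertex. -/
noncomputable def ecc {V : Type*} (G : SimpleGraph V) (x : V) : ℕ :=
  sSup (Set.range (G.dist x))

/-- For every 3SAT formula `φ` on `n` boolean variables (`n` even, `n ≥ 4`), every vertex of
`G(φ)` other than `V₁` and `V_{2n}` has eccentricity strictly less than `3n − 1`; consequently
the only pair of vertices realizing the diameter is `{V₁, V_{2n}}`, and every diametral path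
of `G(φ)` is a shortest path joining `V₁` and `V_{2n}`. -/
theorem Gphi_unique_diametral_pair (n m : ℕ) (hn : Even n) (h4 : 4 ≤ n)
    (φ : Fin m → Fin 3 → Fin n × Bool) :
    (∀ v : Vert n m, v ≠ Vert.chain ⟨0, by omega⟩ → v ≠ Vert.chain ⟨2 * n - 1, by omega⟩ →
      ecc (Gphi n m φ) v < 3 * n - 1) ∧
    (∀ u v : Vert n m, (Gphi n m φ).dist u v = (Gphi n m φ).diam →
      ((u = Vert.chain ⟨0, by omega⟩ ∧ v = Vert.chain ⟨2 * n - 1, by omega⟩) ∨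
       (u = Vert.chain ⟨2 * n - 1, by omega⟩ ∧ v = Vert.chain ⟨0, by omega⟩))) ∧
    (∀ (u v : Vert n m) (p : (Gphi n m φ).Walk u v),
      p.length = (Gphi n m φ).dist u v → (Gphi n m φ).dist u v = (Gphi n m φ).diam →
      ((u = Vert.chain ⟨0, by omega⟩ ∧ v = Vert.chain ⟨2 * n - 1, by omega⟩) ∨
       (u = Vert.chain ⟨2 * n - 1, by omega⟩ ∧ v = Vert.chain ⟨0, by omega⟩))) := by
  have hn2 : n % 2 = 0 := Nat.even_iff.mp hn
  have h2n : (0 : ℕ) < 2 * n := by omega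
  have h2n' : (2 * n - 1 : ℕ) < 2 * n := by omega
  set e0 : Vert n m := Vert.chain ⟨0, h2n⟩ with he0
  set e1 : Vert n m := Vert.chain ⟨2 * n - 1, h2n'⟩ with he1
  have : Nonempty (Vert n m) := ⟨e0⟩
  -- lower bound on dist e0 e1
  have hlow : 3 * n - 1 ≤ (Gphi n m φ).dist e0 e1 := by
    obtain ⟨p, hp⟩ :=
      (GAux.reachable_of_wb (GAux.ub_all h4 e0 e1)).exists_walk_length_eq_dist
    have hwalk := GAux.pf_walk (φ := φ) hn2 h4 p
    have hv0 : ((⟨0, h2n⟩ : Fin (2 * n)) : ℕ) = 0 := rfl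
    have hv1 : ((⟨2 * n - 1, h2n'⟩ : Fin (2 * n)) : ℕ) = 2 * n - 1 := rfl
    have hpf0 : GAux.pf φ e0 = 0 := by
      rw [he0, GAux.pf_chain_val, hv0, if_pos (by omega)]
    have hpf1 : GAux.pf φ e1 = 3 * n - 1 := by
      rw [he1, GAux.pf_chain_val, hv1, if_neg (by omega)]
      omega
    omega
  -- global upper bounds
  have hstrict : ∀ u v : Vert n m, u ≠ e0 → u ≠ e1 → (Gphi n m φ).dist u v ≤ 3 * n - 2 := by
    intro u v hu0 hu1
    refine GAux.dist_le_of_wb (GAux.main_ub h4 u v ?_)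
    rintro k rfl
    constructor
    · rcases Nat.eq_zero_or_pos (k : ℕ) with h | h
      · exact absurd (by rw [he0]; exact congrArg Vert.chain (Fin.ext (by simp [h]))) hu0
      · exact h
    · rcases lt_or_ge (k : ℕ) (2 * n - 1) with h | h
      · exact h
      · have := k.isLt
        exact absurd (by rw [he1]; exact congrArg Vert.chain (Fin.ext (by simp; omega))) hu1
  have hediam : (Gphi n m φ).ediam ≤ ((3 * n - 1 : ℕ) : ℕ∞) := by
    refine SimpleGraph.ediam_le_of_edist_le fun u v => ?_
    obtain ⟨p, hp⟩ := GAux.ub_all (φ := φ) h4 u v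
    exact le_trans (SimpleGraph.edist_le p) (by exact_mod_cast hp)
  have hnetop : (Gphi n m φ).ediam ≠ ⊤ :=
    ne_top_of_le_ne_top (ENat.coe_ne_top _) hediam
  have hdiam_ge : 3 * n - 1 ≤ (Gphi n m φ).diam :=
    le_trans hlow (SimpleGraph.dist_le_diam hnetop)
  have hdiam_le : (Gphi n m φ).diam ≤ 3 * n - 1 := by
    have := ENat.toNat_le_toNat hediam (ENat.coe_ne_top _)
    simpa only [SimpleGraph.diam, ENat.toNat_coe] using this
  have hdiam : (Gphi n m φ).diam = 3 * n - 1 := le_antisymm hdiam_le hdiam_ge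
  have key : ∀ u v : Vert n m, (Gphi n m φ).dist u v = (Gphi n m φ).diam →
      ((u = e0 ∧ v = e1) ∨ (u = e1 ∧ v = e0)) := by
    intro u v hd
    rw [hdiam] at hd
    have hu : u = e0 ∨ u = e1 := by
      by_contra hc; push_neg at hc
      have := hstrict u v hc.1 hc.2
      omega
    have hv : v = e0 ∨ v = e1 := by
      by_contra hc; push_neg at hc
      have := hstrict v u hc.1 hc.2
      rw [SimpleGraph.dist_comm] at this
      omega
    have hne : u ≠ v := by
      intro h; rw [h, SimpleGraph.dist_self] at hd; omega
    rcases hu with rfl | rfl <;> rcases hv with rfl | rfl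
    · exact absurd rfl hne
    · exact Or.inl ⟨rfl, rfl⟩
    · exact Or.inr ⟨rfl, rfl⟩
    · exact absurd rfl hne
  refine ⟨?_, key, fun u v p _ hd => key u v hd⟩
  intro v hv0 hv1
  have hle : ecc (Gphi n m φ) v ≤ 3 * n - 2 := by
    refine csSup_le (Set.range_nonempty _) ?_
    rintro x ⟨u, rfl⟩
    exact hstrict v u hv0 hv1
  omega
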